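/- Let G be a finite abelian p-group and H = G[p] its subgroup of elements of order dividing p. Then the ideal I(H) of Z_p G generated by {h − 1 : h ∈ H} has Z_p-dimension |G| − |G^p|, where G^p = {g^p : g ∈ G}; in particular the p-rank of V(Z_p G) equals |G| − |G^p|. -/

import Mathlib

/-- The augmentation map of a group ring. -/
noncomputable def aug (R G : Type*) [CommRing R] [CommGroup G] :
    MonoidAlgebra R G →ₐ[R] R := MonoidAlgebra.lift R R G 1

/-- The ideal of the group algebra generated by `h - 1` for `h ∈ G[p]`. -/
noncomputable def idealGp (p : ℕ) (R G : Type*) [CommRing R] [CommGroup G] :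
    Ideal (MonoidAlgebra R G) :=
  Ideal.span {x : MonoidAlgebra R G | ∃ h : G, h ^ p = 1 ∧ x = MonoidAlgebra.of R G h - 1}

section Aux

variable (p : ℕ) [Fact p.Prime] (G : Type*) [CommGroup G]

/-- The `p`-power map on the group algebra, as a linear map. -/
noncomputable def powT : MonoidAlgebra (ZMod p) G →ₗ[ZMod p] MonoidAlgebra (ZMod p) G :=
  (MonoidAlgebra.coeffLinearEquiv (ZMod p) (S := ZMod p) (M := G)).symm.toLinearMap ∘ₗ
    Finsupp.lmapDomain (ZMod p) (ZMod p) (fun g : G => g ^ p) ∘ₗ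
    (MonoidAlgebra.coeffLinearEquiv (ZMod p) (S := ZMod p) (M := G)).toLinearMap

instance : CharP (MonoidAlgebra (ZMod p) G) p :=
  charP_of_injective_algebraMap' (ZMod p) p

theorem frob_eq (x : MonoidAlgebra (ZMod p) G) :
    x ^ p = powT p G x := by
  have hp : p.Prime := Fact.out
  show x ^ p = MonoidAlgebra.mapDomain (fun g : G => g ^ p) x
  induction x using MonoidAlgebra.induction_linear with
  | zero => simp [zero_pow hp.ne_zero]
  | add f g hf hg => rw [add_pow_char, MonoidAlgebra.mapDomain_add, hf, hg]
  | single g a =>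
      rw [MonoidAlgebra.mapDomain_single]
      exact (MonoidAlgebra.single_pow g a p).trans (by rw [ZMod.pow_card])

theorem key : Submodule.restrictScalars (ZMod p) (idealGp p (ZMod p) G)
    = LinearMap.ker (powT p G) := by
  classical
  ext x
  simp only [Submodule.restrictScalars_mem, LinearMap.mem_ker]
  constructor
  · intro hx
    rw [← frob_eq]
    refine Submodule.span_induction (p := fun x _ => x ^ p = 0) ?_ ?_ ?_ ?_ hx
    · rintro y ⟨h, hh, rfl⟩
      rw [sub_pow_char, ← map_pow, hh, one_pow, map_one, sub_self]
    · exact zero_pow (Fact.out : p.Prime).ne_zero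
    · intro a b _ _ ha hb; rw [add_pow_char, ha, hb, add_zero]
    · intro r y _ hy; rw [smul_eq_mul, mul_pow, hy, mul_zero]
  · intro hx
    set σ : G → G := fun c => if h : ∃ y : G, y ^ p = c then h.choose else 1 with hσdef
    have hσ : ∀ g : G, (σ (g ^ p)) ^ p = g ^ p := by
      intro g
      have h : ∃ y : G, y ^ p = g ^ p := ⟨g, rfl⟩
      simp only [hσdef, dif_pos h]
      exact h.choose_spec
    set τ : G → G := fun g => σ (g ^ p) with hτdef
    have h2 : MonoidAlgebra.mapDomain τ x = 0 := by
      have : τ = σ ∘ (fun g : G => g ^ p) := rfl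
      show MonoidAlgebra.ofCoeff (Finsupp.mapDomain τ x.coeff) = 0
      rw [this, Finsupp.mapDomain_comp]
      have hx' : Finsupp.mapDomain (fun g : G => g ^ p) x.coeff = 0 :=
        congrArg MonoidAlgebra.coeff hx
      rw [hx', Finsupp.mapDomain_zero, MonoidAlgebra.ofCoeff_zero]
    have hxx : x = x.coeff.sum
        (fun g a => MonoidAlgebra.single g a - MonoidAlgebra.single (τ g) a) := by
      rw [Finsupp.sum_sub, MonoidAlgebra.sum_coeff_single]
      have : (x.coeff.sum fun g a => MonoidAlgebra.single (τ g) a)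
          = MonoidAlgebra.mapDomain τ x := by
        rw [MonoidAlgebra.mapDomain, Finsupp.mapDomain, MonoidAlgebra.ofCoeff_finsuppSum]; rfl
      rw [this, h2, sub_zero]
    rw [hxx]
    refine Submodule.sum_mem _ ?_
    intro g _
    have hmem : MonoidAlgebra.of (ZMod p) G ((τ g)⁻¹ * g) - 1 ∈ idealGp p (ZMod p) G := by
      refine Ideal.subset_span ⟨(τ g)⁻¹ * g, ?_, rfl⟩
      rw [mul_pow, inv_pow, hσ g, inv_mul_cancel]
    have heq : MonoidAlgebra.single (τ g) (x.coeff g) *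
        (MonoidAlgebra.of (ZMod p) G ((τ g)⁻¹ * g) - 1)
        = MonoidAlgebra.single g (x.coeff g) - MonoidAlgebra.single (τ g) (x.coeff g) := by
      rw [mul_sub, mul_one, MonoidAlgebra.of_apply, MonoidAlgebra.single_mul_single,
        mul_inv_cancel_left, mul_one]
    show MonoidAlgebra.single g (x.coeff g) - MonoidAlgebra.single (τ g) (x.coeff g) ∈ idealGp p (ZMod p) G
    rw [← heq]
    exact Ideal.mul_mem_left _ _ hmem


theorem one_add_pow (x : MonoidAlgebra (ZMod p) G) (hx : powT p G x = 0) :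
    (1 + x) ^ p = 1 := by
  rw [add_pow_char, one_pow, frob_eq, hx, add_zero]

/-- The bijection between normalized units of order dividing `p` and the kernel of `powT`. -/
noncomputable def unitsEquivKer :
    {u : (MonoidAlgebra (ZMod p) G)ˣ //
        aug (ZMod p) G (u : MonoidAlgebra (ZMod p) G) = 1 ∧ u ^ p = 1} ≃
      LinearMap.ker (powT p G) where
  toFun u := ⟨(u.1 : MonoidAlgebra (ZMod p) G) - 1, by
    rw [LinearMap.mem_ker, ← frob_eq, sub_pow_char, one_pow, ← Units.val_pow_eq_pow_val,
      u.2.2, Units.val_one, sub_self]⟩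
  invFun x := by
    have h1 : (1 + (x : MonoidAlgebra (ZMod p) G)) ^ p = 1 := one_add_pow p G _ x.2
    have hple : 1 ≤ p := (Fact.out : p.Prime).one_lt.le
    refine ⟨⟨1 + (x : MonoidAlgebra (ZMod p) G), (1 + (x : MonoidAlgebra (ZMod p) G)) ^ (p - 1),
      ?_, ?_⟩, ?_, ?_⟩
    · rw [← pow_succ', Nat.sub_add_cancel hple]; exact h1
    · rw [← pow_succ, Nat.sub_add_cancel hple]; exact h1
    · have h2 := congrArg (aug (ZMod p) G) h1
      rw [map_pow, map_one, ZMod.pow_card] at h2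
      exact h2
    · refine Units.ext ?_
      rw [Units.val_pow_eq_pow_val]
      exact h1
  left_inv u := by
    apply Subtype.ext
    apply Units.ext
    show 1 + ((u.1 : MonoidAlgebra (ZMod p) G) - 1) = (u.1 : MonoidAlgebra (ZMod p) G)
    ring
  right_inv x := by
    apply Subtype.ext
    show (1 + (x : MonoidAlgebra (ZMod p) G)) - 1 = (x : MonoidAlgebra (ZMod p) G)
    ring

variable [Fintype G]

set_option maxHeartbeats 1600000 in
theorem finrank_ker :
    Module.finrank (ZMod p) (LinearMap.ker (powT p G)) =
      Fintype.card G - Nat.card ((powMonoidHom p : G →* G).range) := by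
  classical
  haveI : Module.Finite (ZMod p) (MonoidAlgebra (ZMod p) G) :=
    Module.Finite.equiv (MonoidAlgebra.coeffLinearEquiv (ZMod p) (S := ZMod p) (M := G)).symm
  have h1 : LinearMap.range (Finsupp.lmapDomain (ZMod p) (ZMod p) (fun g : G => g ^ p)) =
      Finsupp.supported (ZMod p) (ZMod p) (Set.range fun g : G => g ^ p) := by
    have h := Finsupp.lmapDomain_supported (M := ZMod p) (R := ZMod p) (α := G)
      (fun g : G => g ^ p) Set.univ
    rwa [Finsupp.supported_univ, Submodule.map_top, Set.image_univ] at h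
  have hs : (((powMonoidHom p : G →* G).range : Subgroup G) : Set G)
      = Set.range fun g : G => g ^ p := by
    ext y; simp [powMonoidHom, MonoidHom.mem_range]
  have hcard : Nat.card ((powMonoidHom p : G →* G).range)
      = Fintype.card ↥(Set.range fun g : G => g ^ p) := by
    rw [← Nat.card_eq_fintype_card]
    exact Nat.card_congr (Equiv.setCongr hs)
  have h2 := LinearMap.finrank_range_add_finrank_ker (powT p G)
  have h3 : Module.finrank (ZMod p)
      (Finsupp.supported (ZMod p) (ZMod p) (Set.range fun g : G => g ^ p))
      = Fintype.card ↥(Set.range fun g : G => g ^ p) := by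
    rw [LinearEquiv.finrank_eq (Finsupp.supportedEquivFinsupp _),
      Module.finrank_finsupp_self]
  have h3' : Module.finrank (ZMod p) (LinearMap.range (powT p G))
      = Fintype.card ↥(Set.range fun g : G => g ^ p) := by
    have e : LinearMap.range (powT p G) = Submodule.map
        (MonoidAlgebra.coeffLinearEquiv (ZMod p) (S := ZMod p) (M := G)).symm.toLinearMap
        (LinearMap.range (Finsupp.lmapDomain (ZMod p) (ZMod p) (fun g : G => g ^ p))) := by
      rw [powT, LinearMap.range_comp, LinearMap.range_comp, LinearEquiv.range, Submodule.map_top]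
    rw [e, LinearEquiv.finrank_map_eq, h1]; exact h3
  have h4 : Module.finrank (ZMod p) (MonoidAlgebra (ZMod p) G) = Fintype.card G :=
    (MonoidAlgebra.coeffLinearEquiv (ZMod p) (S := ZMod p) (M := G)).finrank_eq.trans
      (Module.finrank_finsupp_self (R := ZMod p) (ι := G))
  rw [h3', h4] at h2
  omega

theorem count_units :
    Nat.card {u : (MonoidAlgebra (ZMod p) G)ˣ //
        aug (ZMod p) G (u : MonoidAlgebra (ZMod p) G) = 1 ∧ u ^ p = 1} =
      p ^ Module.finrank (ZMod p) (LinearMap.ker (powT p G)) := by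
  classical
  haveI : Finite (MonoidAlgebra (ZMod p) G) :=
    Finite.of_equiv (G →₀ ZMod p) MonoidAlgebra.coeffEquiv.symm
  haveI : Finite (LinearMap.ker (powT p G)) := Subtype.finite
  haveI : Fintype (LinearMap.ker (powT p G)) := Fintype.ofFinite _
  rw [Nat.card_congr (unitsEquivKer p G), Nat.card_eq_fintype_card,
    Module.card_eq_pow_finrank (K := ZMod p), ZMod.card]

end Aux

/-- The ideal `I(G[p])` of `Z_p G` has `Z_p`-dimension `|G| - |G^p|`, and the
`p`-rank of `V(Z_p G)` is `|G| - |G^p|`. -/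
theorem stmt_16 (p : ℕ) (hp : p.Prime)
    (G : Type*) [CommGroup G] [Fintype G] (hG : IsPGroup p G) :
    Module.finrank (ZMod p)
        (Submodule.restrictScalars (ZMod p) (idealGp p (ZMod p) G)) =
      Fintype.card G - Nat.card ((powMonoidHom p : G →* G).range) ∧
    Nat.card {u : (MonoidAlgebra (ZMod p) G)ˣ //
        aug (ZMod p) G (u : MonoidAlgebra (ZMod p) G) = 1 ∧ u ^ p = 1} =
      p ^ (Fintype.card G - Nat.card ((powMonoidHom p : G →* G).range)) := by
  haveI : Fact p.Prime := ⟨hp⟩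
  constructor
  · rw [key]
    exact finrank_ker p G
  · rw [count_units p G, finrank_ker p G]
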